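/- arXiv:1007.5110 — 7 statements merged into one kernel-verified Lean document; each statement's English description precedes it below -/
import Mathlib

section
/- For every 1 ≤ i ≤ N-1 one has p_i · Υ(i+1) = p_{i+1} · (1-(1-α)·p_i) · Υ(i); in particular, if p_i ≠ 0 and p_{i+1} ≠ 0, then Υ(i+1)/p_{i+1} = (1-(1-α)·p_i) · Υ(i)/p_i. -/
/-- With `S` as in the recursion and the rank-score
`Υ i = p i * ∑_{s=0}^{i-1} α^s * S (i-1) s`, for every `1 ≤ i ≤ N-1` one has
`p i * Υ (i+1) = p (i+1) * (1-(1-α)*p i) * Υ i`; in particular, if `p i ≠ 0` and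
`p (i+1) ≠ 0`, then `Υ (i+1) / p (i+1) = (1-(1-α)*p i) * (Υ i / p i)`. -/
theorem stmt_1 (N : ℕ) (p : ℕ → ℝ) (α : ℝ) (S : ℕ → ℤ → ℝ)
    (hS0 : S 0 0 = 1)
    (hSout : ∀ (i : ℕ) (r : ℤ), i ≤ N → (r < 0 ∨ (i : ℤ) < r) → S i r = 0)
    (hSrec : ∀ (i : ℕ) (r : ℤ), 1 ≤ i → i ≤ N → 0 ≤ r → r ≤ (i : ℤ) →
      S i r = p i * S (i - 1) (r - 1) + (1 - p i) * S (i - 1) r)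
    (Υ : ℕ → ℝ)
    (hΥ : ∀ i, 1 ≤ i → i ≤ N → Υ i = p i * ∑ s ∈ Finset.range i, α ^ s * S (i - 1) (s : ℤ))
    (i : ℕ) (hi1 : 1 ≤ i) (hiN : i ≤ N - 1) :
    p i * Υ (i + 1) = p (i + 1) * (1 - (1 - α) * p i) * Υ i ∧
      (p i ≠ 0 → p (i + 1) ≠ 0 →
        Υ (i + 1) / p (i + 1) = (1 - (1 - α) * p i) * (Υ i / p i)) := by
  have hiN' : i + 1 ≤ N := by omega
  set T : ℝ := ∑ s ∈ Finset.range i, α ^ s * S (i - 1) (s : ℤ) with hT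
  have hΥi : Υ i = p i * T := hΥ i hi1 (by omega)
  have hΥi1 : Υ (i + 1) = p (i + 1) * ∑ s ∈ Finset.range (i + 1), α ^ s * S i (s : ℤ) := by
    simpa using hΥ (i + 1) (by omega) hiN'
  have hsum : ∑ s ∈ Finset.range (i + 1), α ^ s * S i (s : ℤ)
      = (1 - (1 - α) * p i) * T := by
    have hrw : ∑ s ∈ Finset.range (i + 1), α ^ s * S i (s : ℤ)
        = ∑ s ∈ Finset.range (i + 1),
            (p i * (α ^ s * S (i - 1) ((s : ℤ) - 1)) + (1 - p i) * (α ^ s * S (i - 1) (s : ℤ))) := by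
      refine Finset.sum_congr rfl fun s hs => ?_
      rw [hSrec i s hi1 (by omega) (by positivity)
        (by exact_mod_cast Nat.lt_succ_iff.mp (Finset.mem_range.mp hs))]
      ring
    rw [hrw, Finset.sum_add_distrib, ← Finset.mul_sum, ← Finset.mul_sum]
    have h1 : ∑ s ∈ Finset.range (i + 1), α ^ s * S (i - 1) ((s : ℤ) - 1) = α * T := by
      rw [Finset.sum_range_succ']
      have h0 : S (i - 1) (((0 : ℕ) : ℤ) - 1) = 0 :=
        hSout (i - 1) _ (by omega) (Or.inl (by norm_num))
      rw [h0, mul_zero, add_zero, hT, Finset.mul_sum]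
      refine Finset.sum_congr rfl fun s _ => ?_
      simp only [Nat.cast_add, Nat.cast_one, add_sub_cancel_right, pow_succ]
      ring
    have h2 : ∑ s ∈ Finset.range (i + 1), α ^ s * S (i - 1) ((s : ℕ) : ℤ) = T := by
      rw [Finset.sum_range_succ]
      have hz : S (i - 1) ((i : ℕ) : ℤ) = 0 :=
        hSout (i - 1) _ (by omega) (Or.inr (by exact_mod_cast Nat.sub_lt (by omega) one_pos))
      rw [hz, mul_zero, add_zero, hT]
    rw [h1, h2]; ring
  constructor
  · rw [hΥi1, hsum, hΥi]; ring
  · intro hp hp1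
    rw [hΥi1, hsum, hΥi]
    field_simp
end

section
/- (Theorem 1, algebraic form) For every 1 ≤ i ≤ N, Υ(i) = p_i · ∏_{j=1}^{i-1} (1 - (1-α)·p_j). In the paper's notation: Υ(t_i) = m_i · ∏_{j<i} c_j where m_i = p_i and c_j = 1-(1-α)·p_j. -/
/-- Theorem 1, algebraic form: With `S` as in the recursion and the rank-score
`Υ i = p i * ∑_{s=0}^{i-1} α^s * S (i-1) s`, for every `1 ≤ i ≤ N`,
`Υ i = p i * ∏_{j=1}^{i-1} (1 - (1-α) * p j)`, i.e. `Υ(t_i) = m_i * ∏_{j<i} c_j`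
with `m_i = p_i` and `c_j = 1-(1-α)*p_j`. -/
theorem stmt_2 (N : ℕ) (p : ℕ → ℝ) (α : ℝ) (S : ℕ → ℤ → ℝ)
    (hS0 : S 0 0 = 1)
    (hSout : ∀ (i : ℕ) (r : ℤ), i ≤ N → (r < 0 ∨ (i : ℤ) < r) → S i r = 0)
    (hSrec : ∀ (i : ℕ) (r : ℤ), 1 ≤ i → i ≤ N → 0 ≤ r → r ≤ (i : ℤ) →
      S i r = p i * S (i - 1) (r - 1) + (1 - p i) * S (i - 1) r)
    (Υ : ℕ → ℝ)
    (hΥ : ∀ i, 1 ≤ i → i ≤ N → Υ i = p i * ∑ s ∈ Finset.range i, α ^ s * S (i - 1) (s : ℤ))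
    (i : ℕ) (hi1 : 1 ≤ i) (hiN : i ≤ N) :
    Υ i = p i * ∏ j ∈ Finset.Icc 1 (i - 1), (1 - (1 - α) * p j) := by
  have key : ∀ k, k ≤ N → ∑ s ∈ Finset.range (k+1), α ^ s * S k (s : ℤ)
      = ∏ j ∈ Finset.Icc 1 k, (1 - (1 - α) * p j) := by
    intro k
    induction k with
    | zero => intro _; simp [hS0]
    | succ k ih =>
      intro hk
      have hkN : k ≤ N := Nat.le_of_succ_le hk
      have hrw : ∀ s ∈ Finset.range (k+2), α ^ s * S (k+1) (s : ℤ)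
          = α ^ s * (p (k+1) * S k ((s:ℤ) - 1) + (1 - p (k+1)) * S k (s : ℤ)) := by
        intro s hs
        rw [Finset.mem_range] at hs
        have := hSrec (k+1) (s : ℤ) (Nat.succ_le_succ (Nat.zero_le _)) hk
          (Int.ofNat_nonneg s) (by exact_mod_cast Nat.lt_succ_iff.mp hs)
        simp only [Nat.add_sub_cancel] at this
        rw [this]
      rw [Finset.sum_congr rfl hrw]
      have split : ∑ s ∈ Finset.range (k+2),
          α ^ s * (p (k+1) * S k ((s:ℤ) - 1) + (1 - p (k+1)) * S k (s : ℤ))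
          = p (k+1) * ∑ s ∈ Finset.range (k+2), α ^ s * S k ((s:ℤ) - 1)
            + (1 - p (k+1)) * ∑ s ∈ Finset.range (k+2), α ^ s * S k (s : ℤ) := by
        rw [Finset.mul_sum, Finset.mul_sum, ← Finset.sum_add_distrib]
        apply Finset.sum_congr rfl
        intro s _; ring
      rw [split]
      have h1 : ∑ s ∈ Finset.range (k+2), α ^ s * S k ((s:ℤ) - 1)
          = α * ∑ s ∈ Finset.range (k+1), α ^ s * S k (s : ℤ) := by
        rw [Finset.sum_range_succ']
        have hz : S k (((0:ℕ):ℤ) - 1) = 0 := hSout k _ hkN (Or.inl (by norm_num))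
        rw [hz, mul_zero, add_zero, Finset.mul_sum]
        apply Finset.sum_congr rfl
        intro s _
        have hc : (((s+1:ℕ)):ℤ) - 1 = (s:ℤ) := by push_cast; ring
        rw [hc]; ring
      have h2 : ∑ s ∈ Finset.range (k+2), α ^ s * S k (s : ℤ)
          = ∑ s ∈ Finset.range (k+1), α ^ s * S k (s : ℤ) := by
        rw [Finset.sum_range_succ]
        have hz : S k (((k+1 : ℕ)) : ℤ) = 0 := hSout k _ hkN (Or.inr (by push_cast; omega))
        rw [hz, mul_zero, add_zero]
      rw [h1, h2, ih hkN]
      rw [show Finset.Icc 1 (k+1) = insert (k+1) (Finset.Icc 1 k) by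
        ext x; simp [Finset.mem_Icc]; omega]
      rw [Finset.prod_insert (by simp)]
      ring
  obtain ⟨k, rfl⟩ : ∃ k, i = k + 1 := ⟨i - 1, (Nat.succ_pred_eq_of_pos hi1).symm⟩
  rw [hΥ (k+1) hi1 hiN]
  simpa [Nat.add_sub_cancel] using congrArg (p (k+1) * ·) (key k (by omega))
end

section
/- Suppose a new independent tuple with probability q is inserted at position k (its score lies between those of t_{k-1} and t_k), producing the probability sequence p'_1,…,p'_{N+1} = p_1,…,p_{k-1}, q, p_k,…,p_N with rank-scores Υ'. Then for every old tuple t_i: if i < k then Υ'(t_i) = Υ(i) (its rank-score is unchanged), and if i ≥ k then Υ'(t_i) = (1-(1-α)·q)·Υ(i). Consequently, if 1-(1-α)·q > 0, then for any two old tuples t_a, t_b with either both a,b < k or both a,b ≥ k, Υ'(t_a) ≤ Υ'(t_b) if and only if Υ(a) ≤ Υ(b). -/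
/-- Inserting a new independent tuple with probability `q` at position `k`
(producing `p' = p_1, …, p_(k-1), q, p_k, …, p_N`) leaves the rank-score of old tuples `t i`
with `i < k` unchanged, and scales the rank-score of old tuples `t i` with `i ≥ k` by
`1-(1-α)*q`. Consequently, if `1-(1-α)*q > 0`, the relative order of any two old tuples that
are both below position `k` or both at/after position `k` is preserved. -/
theorem stmt_6 (N : ℕ) (p : ℕ → ℝ) (α q : ℝ) (k : ℕ) (hk1 : 1 ≤ k) (hkN : k ≤ N + 1)
    (p' : ℕ → ℝ)
    (hp' : ∀ i, 1 ≤ i → i ≤ N + 1 →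
      p' i = if i < k then p i else if i = k then q else p (i - 1))
    (Υ Υ' : ℕ → ℝ)
    (hΥ : ∀ i, Υ i = p i * ∏ j ∈ Finset.Icc 1 (i - 1), (1 - (1 - α) * p j))
    (hΥ' : ∀ i, Υ' i = p' i * ∏ j ∈ Finset.Icc 1 (i - 1), (1 - (1 - α) * p' j)) :
    (∀ i, 1 ≤ i → i ≤ N → i < k → Υ' i = Υ i) ∧
    (∀ i, 1 ≤ i → i ≤ N → k ≤ i → Υ' (i + 1) = (1 - (1 - α) * q) * Υ i) ∧
    (0 < 1 - (1 - α) * q →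
      ∀ a b, 1 ≤ a → a ≤ N → 1 ≤ b → b ≤ N →
        ((a < k ∧ b < k) ∨ (k ≤ a ∧ k ≤ b)) →
        ((if a < k then Υ' a else Υ' (a + 1)) ≤ (if b < k then Υ' b else Υ' (b + 1)) ↔
          Υ a ≤ Υ b)) := by
  -- Claim A: for m < k, the partial products agree
  have claimA : ∀ m, m < k →
      ∏ j ∈ Finset.Icc 1 m, (1 - (1 - α) * p' j)
        = ∏ j ∈ Finset.Icc 1 m, (1 - (1 - α) * p j) := by
    intro m hm
    apply Finset.prod_congr rfl
    intro j hj
    simp only [Finset.mem_Icc] at hj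
    have hjk : j < k := lt_of_le_of_lt hj.2 hm
    rw [hp' j hj.1 (le_trans (Nat.le_of_lt hjk) hkN), if_pos hjk]
  -- Claim B: for k ≤ m ≤ N+1
  have claimB : ∀ m, k ≤ m → m ≤ N + 1 →
      ∏ j ∈ Finset.Icc 1 m, (1 - (1 - α) * p' j)
        = (1 - (1 - α) * q) * ∏ j ∈ Finset.Icc 1 (m - 1), (1 - (1 - α) * p j) := by
    intro m hm
    induction m, hm using Nat.le_induction with
    | base =>
      intro _
      have hk : k = (k - 1) + 1 := (Nat.succ_pred_eq_of_pos hk1).symm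
      rw [hk, Finset.prod_Icc_succ_top (by omega : 1 ≤ k - 1 + 1)]
      rw [← hk]
      rw [hp' k hk1 hkN, if_neg (lt_irrefl k), if_pos rfl]
      rw [claimA (k - 1) (by omega)]
      ring
    | succ m hm ih =>
      intro hm1
      rw [Finset.prod_Icc_succ_top (by omega : 1 ≤ m + 1)]
      rw [ih (by omega)]
      rw [hp' (m + 1) (by omega) hm1, if_neg (by omega), if_neg (by omega)]
      have : m + 1 - 1 = (m - 1) + 1 := by omega
      rw [this, Finset.prod_Icc_succ_top (by omega : 1 ≤ m - 1 + 1), ← this]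
      ring
  have part1 : ∀ i, 1 ≤ i → i ≤ N → i < k → Υ' i = Υ i := by
    intro i hi1 hiN hik
    rw [hΥ', hΥ, claimA (i - 1) (by omega), hp' i hi1 (by omega), if_pos hik]
  have part2 : ∀ i, 1 ≤ i → i ≤ N → k ≤ i → Υ' (i + 1) = (1 - (1 - α) * q) * Υ i := by
    intro i hi1 hiN hki
    rw [hΥ', hΥ]
    have h1 : i + 1 - 1 = i := rfl
    rw [h1, claimB i hki (by omega)]
    rw [hp' (i + 1) (by omega) (by omega), if_neg (by omega), if_neg (by omega), h1]
    ring
  refine ⟨part1, part2, ?_⟩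
  intro hpos a b ha1 haN hb1 hbN hab
  rcases hab with ⟨hak, hbk⟩ | ⟨hak, hbk⟩
  · rw [if_pos hak, if_pos hbk, part1 a ha1 haN hak, part1 b hb1 hbN hbk]
  · rw [if_neg (by omega), if_neg (by omega), part2 a ha1 haN hak, part2 b hb1 hbN hbk]
    exact mul_le_mul_iff_right₀ hpos
end

section
/- (Merge correctness, argmax form) Let 1 ≤ M < N, let T = {1,…,N}, L = {1,…,M}, R = {M+1,…,N}, and C_L = ∏_{j=1}^{M} c_j. Suppose a ∈ L maximizes f_L over L and b ∈ R maximizes f_R over R. Then f_T attains its maximum over T at a or at b: if f_L(a) ≥ C_L·f_R(b) then f_T(a) = max_{i∈T} f_T(i), and otherwise f_T(b) = max_{i∈T} f_T(i). -/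
/-- Merge correctness, argmax form: with `f_U i = m i * ∏_{j ∈ U, j < i} c j`,
`T = {1,…,N}`, `L = {1,…,M}`, `R = {M+1,…,N}` and `C_L = ∏_{j=1}^{M} c j`, if `a` maximizes
`f_L` over `L` and `b` maximizes `f_R` over `R`, then `f_T` attains its maximum over `T` at `a`
or at `b`: if `f_L a ≥ C_L * f_R b` then `f_T a = max_{i∈T} f_T i`, and otherwise
`f_T b = max_{i∈T} f_T i`. -/
theorem stmt_8 (N M : ℕ) (hM : 1 ≤ M) (hMN : M < N) (m c : ℕ → ℝ) (hc : ∀ j, 0 < c j)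
    (a b : ℕ) (ha : a ∈ Finset.Icc 1 M) (hb : b ∈ Finset.Icc (M + 1) N)
    (hamax : ∀ i ∈ Finset.Icc 1 M,
      m i * ∏ j ∈ (Finset.Icc 1 M).filter (fun j => j < i), c j ≤
        m a * ∏ j ∈ (Finset.Icc 1 M).filter (fun j => j < a), c j)
    (hbmax : ∀ i ∈ Finset.Icc (M + 1) N,
      m i * ∏ j ∈ (Finset.Icc (M + 1) N).filter (fun j => j < i), c j ≤
        m b * ∏ j ∈ (Finset.Icc (M + 1) N).filter (fun j => j < b), c j) :
    ((∏ j ∈ Finset.Icc 1 M, c j) *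
          (m b * ∏ j ∈ (Finset.Icc (M + 1) N).filter (fun j => j < b), c j) ≤
        m a * ∏ j ∈ (Finset.Icc 1 M).filter (fun j => j < a), c j →
      m a * ∏ j ∈ (Finset.Icc 1 N).filter (fun j => j < a), c j
        = (Finset.Icc 1 N).sup' (Finset.nonempty_Icc.mpr (hM.trans hMN.le))
            (fun i => m i * ∏ j ∈ (Finset.Icc 1 N).filter (fun j => j < i), c j)) ∧
    (m a * ∏ j ∈ (Finset.Icc 1 M).filter (fun j => j < a), c j <
        (∏ j ∈ Finset.Icc 1 M, c j) *
          (m b * ∏ j ∈ (Finset.Icc (M + 1) N).filter (fun j => j < b), c j) →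
      m b * ∏ j ∈ (Finset.Icc 1 N).filter (fun j => j < b), c j
        = (Finset.Icc 1 N).sup' (Finset.nonempty_Icc.mpr (hM.trans hMN.le))
            (fun i => m i * ∏ j ∈ (Finset.Icc 1 N).filter (fun j => j < i), c j)) := by
  obtain ⟨ha1, haM⟩ := Finset.mem_Icc.mp ha
  obtain ⟨hb1, hbN⟩ := Finset.mem_Icc.mp hb
  have hCL : 0 < ∏ j ∈ Finset.Icc 1 M, c j := Finset.prod_pos (fun j _ => hc j)
  -- For i ≤ M, filters agree
  have hL : ∀ i, i ≤ M → (Finset.Icc 1 N).filter (fun j => j < i)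
      = (Finset.Icc 1 M).filter (fun j => j < i) := by
    intro i hi
    ext j
    simp only [Finset.mem_filter, Finset.mem_Icc]
    omega
  -- For i ≥ M+1, the T-product splits
  have hR : ∀ i, M + 1 ≤ i →
      (∏ j ∈ (Finset.Icc 1 N).filter (fun j => j < i), c j)
      = (∏ j ∈ Finset.Icc 1 M, c j) *
        ∏ j ∈ (Finset.Icc (M + 1) N).filter (fun j => j < i), c j := by
    intro i hi
    rw [← Finset.prod_union]
    · congr 1
      ext j
      simp only [Finset.mem_filter, Finset.mem_Icc, Finset.mem_union]
      omega
    · rw [Finset.disjoint_left]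
      intro j hj hj'
      simp only [Finset.mem_filter, Finset.mem_Icc] at hj hj'
      omega
  set fL := m a * ∏ j ∈ (Finset.Icc 1 M).filter (fun j => j < a), c j with hfL
  set fR := m b * ∏ j ∈ (Finset.Icc (M + 1) N).filter (fun j => j < b), c j with hfR
  have hTa : m a * ∏ j ∈ (Finset.Icc 1 N).filter (fun j => j < a), c j = fL := by
    rw [hL a haM]
  have hTb : m b * ∏ j ∈ (Finset.Icc 1 N).filter (fun j => j < b), c j
      = (∏ j ∈ Finset.Icc 1 M, c j) * fR := by
    rw [hR b hb1]; ring
  have haT : a ∈ Finset.Icc 1 N := Finset.mem_Icc.mpr ⟨ha1, le_trans haM hMN.le⟩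
  have hbT : b ∈ Finset.Icc 1 N := Finset.mem_Icc.mpr ⟨by omega, hbN⟩
  constructor
  · intro h
    apply le_antisymm
    · exact Finset.le_sup' (fun i => m i * ∏ j ∈ (Finset.Icc 1 N).filter (fun j => j < i), c j) haT
    · apply Finset.sup'_le
      intro i hi
      obtain ⟨hi1, hiN⟩ := Finset.mem_Icc.mp hi
      rw [hTa]
      by_cases hiM : i ≤ M
      · rw [hL i hiM]; exact hamax i (Finset.mem_Icc.mpr ⟨hi1, hiM⟩)
      · rw [hR i (by omega), ← mul_assoc, mul_comm (m i), mul_assoc]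
        calc (∏ j ∈ Finset.Icc 1 M, c j) *
              (m i * ∏ j ∈ (Finset.Icc (M + 1) N).filter (fun j => j < i), c j)
            ≤ (∏ j ∈ Finset.Icc 1 M, c j) * fR := by
              exact mul_le_mul_of_nonneg_left
                (hbmax i (Finset.mem_Icc.mpr ⟨by omega, hiN⟩)) hCL.le
          _ ≤ fL := h
  · intro h
    apply le_antisymm
    · exact Finset.le_sup' (fun i => m i * ∏ j ∈ (Finset.Icc 1 N).filter (fun j => j < i), c j) hbT
    · apply Finset.sup'_le
      intro i hi
      obtain ⟨hi1, hiN⟩ := Finset.mem_Icc.mp hi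
      rw [hTb]
      by_cases hiM : i ≤ M
      · rw [hL i hiM]
        calc m i * ∏ j ∈ (Finset.Icc 1 M).filter (fun j => j < i), c j
            ≤ fL := hamax i (Finset.mem_Icc.mpr ⟨hi1, hiM⟩)
          _ ≤ (∏ j ∈ Finset.Icc 1 M, c j) * fR := h.le
      · rw [hR i (by omega), ← mul_assoc, mul_comm (m i), mul_assoc]
        exact mul_le_mul_of_nonneg_left
          (hbmax i (Finset.mem_Icc.mpr ⟨by omega, hiN⟩)) hCL.le
end

section
/- (Theorem 3) Consider any full binary tree whose leaves, read from left to right, are the indices 1,…,N. Label each leaf i with (top = i, M = m_i, C = c_i), and label each internal node u with left child v and right child w by the MERGE rule: M_u = max(M_v, C_v·M_w); top_u = top_v if M_v ≥ C_v·M_w and top_u = top_w otherwise; C_u = C_v·C_w. Then at the root, M_root = max_{1≤i≤N} f(i), and the index top_root attains this maximum, i.e. f(top_root) = max_{1≤i≤N} f(i), where f(i) = m_i · ∏_{j<i} c_j. -/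
/-- A full binary tree whose leaves carry natural-number indices: every internal node has
exactly two children. -/
inductive FullBinTree where
  | leaf : ℕ → FullBinTree
  | node : FullBinTree → FullBinTree → FullBinTree

/-- The leaves of the tree, read from left to right. -/
def FullBinTree.leaves : FullBinTree → List ℕ
  | .leaf i => [i]
  | .node v w => v.leaves ++ w.leaves

/-- The labelling `(top, M, C)` of the nodes of a tree: a leaf `i` is labelled
`(i, m i, c i)`, and an internal node `u` with left child `v` and right child `w` is labelled
by the MERGE rule: `M_u = max M_v (C_v * M_w)`; `top_u = top_v` if `M_v ≥ C_v * M_w` and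
`top_u = top_w` otherwise; `C_u = C_v * C_w`. -/
noncomputable def FullBinTree.label (m c : ℕ → ℝ) : FullBinTree → ℕ × ℝ × ℝ
  | .leaf i => (i, m i, c i)
  | .node v w =>
      let lv := FullBinTree.label m c v
      let lw := FullBinTree.label m c w
      (if lv.2.2 * lw.2.1 ≤ lv.2.1 then lv.1 else lw.1,
        max lv.2.1 (lv.2.2 * lw.2.1),
        lv.2.2 * lw.2.2)

lemma FullBinTree.leaves_ne_nil (t : FullBinTree) : t.leaves ≠ [] := by
  induction t with
  | leaf i => simp [FullBinTree.leaves]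
  | node v w hv hw => simp [FullBinTree.leaves, hv]

lemma aux_main (m c : ℕ → ℝ) (hc : ∀ j, 0 < c j) :
    ∀ (t : FullBinTree) (a n : ℕ) (hn : 1 ≤ n), t.leaves = List.range' a n →
      (t.label m c).2.2 = ∏ j ∈ Finset.Ico a (a + n), c j ∧
      (t.label m c).1 ∈ Finset.Ico a (a + n) ∧
      m (t.label m c).1 * ∏ j ∈ Finset.Ico a (t.label m c).1, c j = (t.label m c).2.1 ∧
      (t.label m c).2.1 = (Finset.Ico a (a + n)).sup'
          (Finset.nonempty_Ico.mpr (by omega))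
          (fun i => m i * ∏ j ∈ Finset.Ico a i, c j) := by
  intro t
  induction t with
  | leaf i =>
    intro a n hn ht
    have hlen : n = 1 := by
      have := congrArg List.length ht
      simpa [FullBinTree.leaves] using this.symm
    subst hlen
    have hia : i = a := by
      simpa [FullBinTree.leaves, List.range'] using ht
    subst hia
    simp [FullBinTree.label, Finset.Ico_self]
  | node v w ihv ihw =>
    intro a n hn ht
    set p := v.leaves.length with hp
    set q := w.leaves.length with hq
    have hp1 : 1 ≤ p := by
      have := FullBinTree.leaves_ne_nil v
      cases hvl : v.leaves with
      | nil => exact absurd hvl this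
      | cons x xs => simp [hp, hvl]
    have hq1 : 1 ≤ q := by
      have := FullBinTree.leaves_ne_nil w
      cases hwl : w.leaves with
      | nil => exact absurd hwl this
      | cons x xs => simp [hq, hwl]
    have hpq : p + q = n := by
      have := congrArg List.length ht
      simpa [FullBinTree.leaves] using this
    have hsplit : v.leaves ++ w.leaves = List.range' a p ++ List.range' (a + p) q := by
      have hr := List.range'_append (s := a) (m := p) (n := q) (step := 1)
      simp only [one_mul] at hr
      rw [show n = p + q by omega] at ht
      rw [← hr] at ht
      exact ht
    have hlen' : v.leaves.length = (List.range' a p).length := by simp [← hp]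
    obtain ⟨hv, hw⟩ := List.append_inj hsplit hlen'
    obtain ⟨hCv, htopv, hfv, hMv⟩ := ihv a p hp1 hv
    obtain ⟨hCw, htopw, hfw, hMw⟩ := ihw (a + p) q hq1 hw
    have hCvpos : 0 < (v.label m c).2.2 := by
      rw [hCv]; exact Finset.prod_pos (fun j _ => hc j)
    have hkey : ∀ i ∈ Finset.Ico (a + p) (a + p + q),
        (v.label m c).2.2 * (m i * ∏ j ∈ Finset.Ico (a + p) i, c j)
          = m i * ∏ j ∈ Finset.Ico a i, c j := by
      intro i hi
      rw [Finset.mem_Ico] at hi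
      rw [hCv]
      rw [show (∏ j ∈ Finset.Ico a (a + p), c j) * (m i * ∏ j ∈ Finset.Ico (a + p) i, c j)
            = m i * ((∏ j ∈ Finset.Ico a (a + p), c j) * ∏ j ∈ Finset.Ico (a + p) i, c j)
          by ring]
      rw [Finset.prod_Ico_consecutive c (by omega) hi.1]
    have hne1 : (Finset.Ico a (a + p)).Nonempty := Finset.nonempty_Ico.mpr (by omega)
    have hne2 : (Finset.Ico (a + p) (a + p + q)).Nonempty := Finset.nonempty_Ico.mpr (by omega)
    have han : a + n = a + p + q := by omega
    have hunion : Finset.Ico a (a + p) ∪ Finset.Ico (a + p) (a + p + q)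
        = Finset.Ico a (a + n) := by
      rw [Finset.Ico_union_Ico_eq_Ico (by omega) (by omega), han]
    have h1 : (v.label m c).2.2 * (w.label m c).2.1
        = (Finset.Ico (a + p) (a + p + q)).sup' hne2
            (fun i => m i * ∏ j ∈ Finset.Ico a i, c j) := by
      rw [hMw, Finset.comp_sup'_eq_sup'_comp hne2 (fun x => (v.label m c).2.2 * x)
        (fun x y => mul_max_of_nonneg x y hCvpos.le)]
      exact Finset.sup'_congr hne2 rfl hkey
    have hMnode : max (v.label m c).2.1 ((v.label m c).2.2 * (w.label m c).2.1)
        = (Finset.Ico a (a + n)).sup' (Finset.nonempty_Ico.mpr (by omega))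
            (fun i => m i * ∏ j ∈ Finset.Ico a i, c j) := by
      rw [hMv, h1, ← Finset.sup'_union hne1 hne2 (fun i => m i * ∏ j ∈ Finset.Ico a i, c j)]
      exact Finset.sup'_congr _ hunion (fun x _ => rfl)
    have hlab : FullBinTree.label m c (v.node w)
        = (if (v.label m c).2.2 * (w.label m c).2.1 ≤ (v.label m c).2.1
            then (v.label m c).1 else (w.label m c).1,
          max (v.label m c).2.1 ((v.label m c).2.2 * (w.label m c).2.1),
          (v.label m c).2.2 * (w.label m c).2.2) := rfl
    rw [hlab]
    refine ⟨?_, ?_, ?_, hMnode⟩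
    · show (v.label m c).2.2 * (w.label m c).2.2 = _
      rw [hCv, hCw, Finset.prod_Ico_consecutive c (by omega) (by omega), han]
    · show (if _ then (v.label m c).1 else (w.label m c).1) ∈ _
      split
      · rw [← hunion]; exact Finset.mem_union_left _ htopv
      · rw [← hunion]; exact Finset.mem_union_right _ htopw
    · show m (if _ then _ else _) * ∏ j ∈ Finset.Ico a (if _ then _ else _), c j
        = max (v.label m c).2.1 ((v.label m c).2.2 * (w.label m c).2.1)
      split
      case isTrue h =>
        rw [hfv, max_eq_left h]
      case isFalse h =>
        rw [max_eq_right (le_of_not_ge h),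
          ← hkey (w.label m c).1 htopw, hfw]

/-- Theorem 3: For any full binary tree whose leaves, read from left to right,
are `1, …, N`, labelled by the MERGE rule, the root satisfies `M_root = max_{1≤i≤N} f i` and
`f top_root = max_{1≤i≤N} f i`, where `f i = m i * ∏_{j<i} c j`. -/
theorem stmt_9 (N : ℕ) (hN : 1 ≤ N) (m c : ℕ → ℝ) (hc : ∀ j, 0 < c j)
    (t : FullBinTree) (ht : t.leaves = List.range' 1 N) :
    (FullBinTree.label m c t).2.1
        = (Finset.Icc 1 N).sup' (Finset.nonempty_Icc.mpr hN)
            (fun i => m i * ∏ j ∈ Finset.Icc 1 (i - 1), c j) ∧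
    m (FullBinTree.label m c t).1 *
        ∏ j ∈ Finset.Icc 1 ((FullBinTree.label m c t).1 - 1), c j
      = (Finset.Icc 1 N).sup' (Finset.nonempty_Icc.mpr hN)
          (fun i => m i * ∏ j ∈ Finset.Icc 1 (i - 1), c j) := by
  obtain ⟨hC, htop, hf, hM⟩ := aux_main m c hc t 1 N hN ht
  have hIcc : Finset.Ico 1 (1 + N) = Finset.Icc 1 N := by
    rw [add_comm, Finset.Ico_add_one_right_eq_Icc]
  have hcongr : ∀ i ∈ Finset.Icc 1 N,
      (fun i => m i * ∏ j ∈ Finset.Ico 1 i, c j) i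
        = (fun i => m i * ∏ j ∈ Finset.Icc 1 (i - 1), c j) i := by
    intro i hi
    rw [Finset.mem_Icc] at hi
    have : Finset.Ico 1 i = Finset.Icc 1 (i - 1) := by
      rw [← Finset.Ico_add_one_right_eq_Icc]; congr 1; omega
    simp only [this]
  have hsup : (Finset.Ico 1 (1 + N)).sup' (Finset.nonempty_Ico.mpr (by omega))
        (fun i => m i * ∏ j ∈ Finset.Ico 1 i, c j)
      = (Finset.Icc 1 N).sup' (Finset.nonempty_Icc.mpr hN)
        (fun i => m i * ∏ j ∈ Finset.Icc 1 (i - 1), c j) :=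
    Finset.sup'_congr _ hIcc (by rw [hIcc] at *; exact hcongr)
  have htopmem : 1 ≤ (FullBinTree.label m c t).1 ∧ (FullBinTree.label m c t).1 ≤ N := by
    rw [hIcc] at htop; exact Finset.mem_Icc.mp htop
  have hIcotop : Finset.Ico 1 (FullBinTree.label m c t).1
      = Finset.Icc 1 ((FullBinTree.label m c t).1 - 1) := by
    rw [← Finset.Ico_add_one_right_eq_Icc]; congr 1; omega
  constructor
  · rw [hM, hsup]
  · rw [← hIcotop, hf, hM, hsup]
end

section
/- (Ratio lemma, correlated case) For every 1 ≤ i ≤ N-1, Υ(i+1)/m_{i+1} = c_i · (Υ(i)/m_i). -/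
/-- Ratio lemma, correlated case: with `Pr b i = ∑_{j < i, π j = b} p j`,
`p̂ i = Pr (π i) i`, `m i = p i / (1-(1-α)*p̂ i)`,
`c i = (1-(1-α)*(p̂ i + p i)) / (1-(1-α)*p̂ i)` and rank-score
`Υ i = p i * ∏_{b ≠ π i} (1-(1-α)*Pr b i)`, for every `1 ≤ i ≤ N-1`,
`Υ (i+1) / m (i+1) = c i * (Υ i / m i)`. -/
theorem stmt_11 (N : ℕ) (α : ℝ) (hα0 : 0 < α) (hα1 : α ≤ 1)
    {B : Type*} [Fintype B] [DecidableEq B] (π : ℕ → B) (p : ℕ → ℝ)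
    (hp : ∀ i, 1 ≤ i → i ≤ N → 0 < p i)
    (hsum : ∀ b : B, ∑ j ∈ (Finset.Icc 1 N).filter (fun j => π j = b), p j ≤ 1)
    (Pr : B → ℕ → ℝ)
    (hPr : ∀ (b : B) (i : ℕ), Pr b i = ∑ j ∈ (Finset.Ico 1 i).filter (fun j => π j = b), p j)
    (phat m c Υ : ℕ → ℝ)
    (hphat : ∀ i, phat i = Pr (π i) i)
    (hm : ∀ i, m i = p i / (1 - (1 - α) * phat i))
    (hc : ∀ i, c i = (1 - (1 - α) * (phat i + p i)) / (1 - (1 - α) * phat i))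
    (hΥ : ∀ i, Υ i = p i * ∏ b ∈ Finset.univ.erase (π i), (1 - (1 - α) * Pr b i))
    (i : ℕ) (hi1 : 1 ≤ i) (hiN : i ≤ N - 1) :
    Υ (i + 1) / m (i + 1) = c i * (Υ i / m i) := by
  have hN2 : i + 1 ≤ N := by omega
  have hpi : 0 < p i := hp i hi1 (by omega)
  have h1α : 0 ≤ 1 - α := by linarith
  have hPrb : ∀ (b : B) (j : ℕ), j ≤ N + 1 → 0 ≤ Pr b j ∧ Pr b j ≤ 1 := by
    intro b j hj
    rw [hPr]
    constructor
    · apply Finset.sum_nonneg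
      intro k hk
      simp only [Finset.mem_filter, Finset.mem_Ico] at hk
      exact (hp k hk.1.1 (by omega)).le
    · calc ∑ k ∈ (Finset.Ico 1 j).filter (fun j => π j = b), p k
          ≤ ∑ k ∈ (Finset.Icc 1 N).filter (fun j => π j = b), p k := by
            apply Finset.sum_le_sum_of_subset_of_nonneg
            · apply Finset.filter_subset_filter
              intro x hx
              simp only [Finset.mem_Ico] at hx
              simp only [Finset.mem_Icc]
              omega
            · intro k hk _
              simp only [Finset.mem_filter, Finset.mem_Icc] at hk
              exact (hp k hk.1.1 hk.1.2).le
      _ ≤ 1 := hsum b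
  have hD : ∀ j, j ≤ N + 1 → 0 < 1 - (1 - α) * phat j := by
    intro j hj
    rw [hphat]
    obtain ⟨h0, h1⟩ := hPrb (π j) j hj
    nlinarith
  have hDi := hD i (by omega)
  have hDi1 := hD (i + 1) (by omega)
  have hform : ∀ j, 1 ≤ j → j ≤ N → Υ j / m j = ∏ b ∈ Finset.univ, (1 - (1 - α) * Pr b j) := by
    intro j hj1 hjN
    have hpj := hp j hj1 hjN
    have hDj := hD j (by omega)
    rw [hΥ, hm, ← Finset.mul_prod_erase Finset.univ (fun b => 1 - (1 - α) * Pr b j)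
      (Finset.mem_univ (π j)), ← hphat]
    field_simp
  have hPrsucc : ∀ b, Pr b (i + 1) = Pr b i + (if π i = b then p i else 0) := by
    intro b
    rw [hPr, hPr, Finset.sum_filter, Finset.sum_filter, Finset.sum_Ico_succ_top hi1]
  rw [hform (i + 1) (by omega) hN2, hform i hi1 (by omega),
    ← Finset.mul_prod_erase Finset.univ (fun b => 1 - (1 - α) * Pr b (i + 1))
      (Finset.mem_univ (π i)),
    ← Finset.mul_prod_erase Finset.univ (fun b => 1 - (1 - α) * Pr b i)
      (Finset.mem_univ (π i))]
  have hprod : ∏ b ∈ Finset.univ.erase (π i), (1 - (1 - α) * Pr b (i + 1))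
      = ∏ b ∈ Finset.univ.erase (π i), (1 - (1 - α) * Pr b i) := by
    apply Finset.prod_congr rfl
    intro b hb
    have hb' : b ≠ π i := (Finset.mem_erase.mp hb).1
    rw [hPrsucc b, if_neg (Ne.symm hb'), add_zero]
  have hhead : Pr (π i) (i + 1) = phat i + p i := by
    rw [hPrsucc (π i), if_pos rfl, hphat]
  simp only [hprod, hhead, hc, ← hphat]
  field_simp
end

section
/- (Theorem 2) For every 1 ≤ i ≤ N, Υ(i) = m_i · ∏_{j=1}^{i-1} c_j. -/
/-- Theorem 2: with `Pr b i = ∑_{j < i, π j = b} p j`, `p̂ i = Pr (π i) i`,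
`m i = p i / (1-(1-α)*p̂ i)`, `c i = (1-(1-α)*(p̂ i + p i)) / (1-(1-α)*p̂ i)` and rank-score
`Υ i = p i * ∏_{b ≠ π i} (1-(1-α)*Pr b i)`, for every `1 ≤ i ≤ N`,
`Υ i = m i * ∏_{j=1}^{i-1} c j`. -/
theorem stmt_12 (N : ℕ) (α : ℝ) (hα0 : 0 < α) (hα1 : α ≤ 1)
    {B : Type*} [Fintype B] [DecidableEq B] (π : ℕ → B) (p : ℕ → ℝ)
    (hp : ∀ i, 1 ≤ i → i ≤ N → 0 < p i)
    (hsum : ∀ b : B, ∑ j ∈ (Finset.Icc 1 N).filter (fun j => π j = b), p j ≤ 1)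
    (Pr : B → ℕ → ℝ)
    (hPr : ∀ (b : B) (i : ℕ), Pr b i = ∑ j ∈ (Finset.Ico 1 i).filter (fun j => π j = b), p j)
    (phat m c Υ : ℕ → ℝ)
    (hphat : ∀ i, phat i = Pr (π i) i)
    (hm : ∀ i, m i = p i / (1 - (1 - α) * phat i))
    (hc : ∀ i, c i = (1 - (1 - α) * (phat i + p i)) / (1 - (1 - α) * phat i))
    (hΥ : ∀ i, Υ i = p i * ∏ b ∈ Finset.univ.erase (π i), (1 - (1 - α) * Pr b i))
    (i : ℕ) (hi1 : 1 ≤ i) (hiN : i ≤ N) :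
    Υ i = m i * ∏ j ∈ Finset.Icc 1 (i - 1), c j := by
  -- nonnegativity of Pr
  have hPrnn : ∀ (b : B) (k : ℕ), k ≤ N + 1 → 0 ≤ Pr b k := by
    intro b k hk
    rw [hPr]
    apply Finset.sum_nonneg
    intro j hj
    simp only [Finset.mem_filter, Finset.mem_Ico] at hj
    exact (hp j hj.1.1 (by omega)).le
  -- phat k + p k ≤ 1
  have hbound : ∀ k, 1 ≤ k → k ≤ N → Pr (π k) k + p k ≤ 1 := by
    intro k h1 h2
    have hknot : k ∉ (Finset.Ico 1 k).filter (fun j => π j = π k) := by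
      simp [Finset.mem_Ico]
    have hsub : insert k ((Finset.Ico 1 k).filter (fun j => π j = π k)) ⊆
        (Finset.Icc 1 N).filter (fun j => π j = π k) := by
      intro x hx
      simp only [Finset.mem_insert, Finset.mem_filter, Finset.mem_Ico] at hx
      rcases hx with rfl | hx
      · simp [Finset.mem_Icc]; omega
      · simp only [Finset.mem_filter, Finset.mem_Icc]
        exact ⟨⟨hx.1.1, by omega⟩, hx.2⟩
    have hle : ∑ j ∈ insert k ((Finset.Ico 1 k).filter (fun j => π j = π k)), p j ≤
        ∑ j ∈ (Finset.Icc 1 N).filter (fun j => π j = π k), p j := by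
      apply Finset.sum_le_sum_of_subset_of_nonneg hsub
      intro j hj _
      simp only [Finset.mem_filter, Finset.mem_Icc] at hj
      exact (hp j hj.1.1 hj.1.2).le
    rw [Finset.sum_insert hknot] at hle
    have := hsum (π k)
    rw [hPr]
    linarith
  -- denominator is positive
  have hden : ∀ k, 1 ≤ k → k ≤ N → 0 < 1 - (1 - α) * phat k := by
    intro k h1 h2
    rw [hphat]
    have h0 : 0 ≤ Pr (π k) k := hPrnn _ k (by omega)
    have hb := hbound k h1 h2
    have hpk := hp k h1 h2
    have hmul : (1 - α) * Pr (π k) k ≤ Pr (π k) k :=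
      mul_le_of_le_one_left h0 (by linarith)
    linarith
  -- recurrence for Pr
  have hPrsucc : ∀ (b : B) (k : ℕ), 1 ≤ k →
      Pr b (k + 1) = Pr b k + (if π k = b then p k else 0) := by
    intro b k hk
    rw [hPr, hPr]
    have : Finset.Ico 1 (k + 1) = insert k (Finset.Ico 1 k) := by
      ext x; simp only [Finset.mem_Ico, Finset.mem_insert]; omega
    rw [this, Finset.filter_insert]
    by_cases h : π k = b
    · rw [if_pos h, Finset.sum_insert (by simp [Finset.mem_Ico]), if_pos h]
      ring
    · rw [if_neg h, if_neg h, add_zero]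
  -- main telescoping identity
  have key : ∀ k, k ≤ i → ∏ j ∈ Finset.Ico 1 k, c j = ∏ b : B, (1 - (1 - α) * Pr b k) := by
    intro k
    induction k with
    | zero =>
      intro _
      simp [hPr]
    | succ k ih =>
      intro hk1
      rcases Nat.eq_zero_or_pos k with rfl | hk0
      · simp [hPr, Finset.Ico_self]
      have hk1' : 1 ≤ k := hk0
      have hkN : k ≤ N := by omega
      rw [Finset.prod_Ico_succ_top hk1', ih (by omega)]
      -- split products at π k
      rw [← Finset.mul_prod_erase Finset.univ _ (Finset.mem_univ (π k)),
        ← Finset.mul_prod_erase Finset.univ _ (Finset.mem_univ (π k))]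
      have herase : ∏ b ∈ Finset.univ.erase (π k), (1 - (1 - α) * Pr b (k + 1)) =
          ∏ b ∈ Finset.univ.erase (π k), (1 - (1 - α) * Pr b k) := by
        apply Finset.prod_congr rfl
        intro b hb
        have hbne : π k ≠ b := by
          simp only [Finset.mem_erase] at hb
          exact fun h => hb.1 h.symm
        rw [hPrsucc b k hk1', if_neg hbne, add_zero]
      rw [herase]
      have hmain : Pr (π k) (k + 1) = Pr (π k) k + p k := by
        rw [hPrsucc _ k hk1', if_pos rfl]
      rw [hmain, hc k, hphat]
      have hdk : (1 - (1 - α) * Pr (π k) k) ≠ 0 := by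
        have := hden k hk1' hkN
        rw [hphat] at this
        linarith
      field_simp
  -- finish
  have hIcc : Finset.Icc 1 (i - 1) = Finset.Ico 1 i := by
    rw [← Finset.Ico_add_one_right_eq_Icc]
    congr 1
    omega
  rw [hIcc, key i le_rfl, hΥ i, hm i,
    ← Finset.mul_prod_erase Finset.univ _ (Finset.mem_univ (π i))]
  have hdi : (1 - (1 - α) * phat i) ≠ 0 := (hden i hi1 hiN).ne'
  rw [hphat] at hdi ⊢
  field_simp
end
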